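/- Under the TAID regression recursion, if λ_τ ≥ 0 for every τ, then for every integer t with 0 ≤ t ≤ T one has ‖z̃_t‖ ≥ (t/T)·‖z_0‖. -/

import Mathlib

/-- Under the TAID regression recursion, if `λ τ ≥ 0` for every `τ`,
then for every integer `t` with `0 ≤ t ≤ T` one has `‖z̃ t‖ ≥ (t/T) ⬝ ‖z 0‖`. -/
theorem taid_norm_lower_bound
    (N T : ℕ) (hN : 1 ≤ N) (hT : 1 ≤ T) (ε : ℝ) (hε : 0 < ε)
    (d : Fin N → ℝ) (hd : ∀ k, 0 < d k)
    (lam : ℕ → ℝ) (hlam : ∀ τ, 0 ≤ lam τ)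
    (z0 : EuclideanSpace ℝ (Fin N))
    (z ztilde : ℕ → EuclideanSpace ℝ (Fin N))
    (hz0 : ztilde 0 = z0)
    (hz : ∀ τ : ℕ, z (τ + 1) =
      ((Matrix.diagonal d) *
        (lam τ • (1 : Matrix (Fin N) (Fin N) ℝ) + Matrix.diagonal d)⁻¹).mulVec (ztilde τ))
    (hzt : ∀ τ : ℕ, ztilde (τ + 1) =
      (1 - ((τ + 1 : ℕ) : ℝ) / (T : ℝ)) • z (τ + 1) + (((τ + 1 : ℕ) : ℝ) / (T : ℝ)) • z0) :
    ∀ t : ℕ, t ≤ T → ((t : ℝ) / (T : ℝ)) * ‖z0‖ ≤ ‖ztilde t‖ := by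
  have hT' : (0:ℝ) < (T:ℝ) := by exact_mod_cast hT
  have key : ∀ t : ℕ, t ≤ T → ∀ k, ((t:ℝ)/(T:ℝ)) * (z0 k * z0 k) ≤ ztilde t k * z0 k := by
    intro t
    induction t with
    | zero =>
      intro _ k
      simp only [Nat.cast_zero, zero_div, zero_mul, hz0]
      exact mul_self_nonneg _
    | succ τ ih =>
      intro hτ k
      have hτT : τ ≤ T := Nat.le_of_succ_le hτ
      have ihk := ih hτT k
      have hdk := hd k
      have hlk := hlam τ
      have hpos : 0 < lam τ + d k := by linarith
      -- compute the inverse matrix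
      have h1 : lam τ • (1 : Matrix (Fin N) (Fin N) ℝ) + Matrix.diagonal d
          = Matrix.diagonal (fun k => lam τ + d k) := by
        rw [Matrix.smul_one_eq_diagonal, ← Matrix.diagonal_add]
      have hinv : (lam τ • (1 : Matrix (Fin N) (Fin N) ℝ) + Matrix.diagonal d)⁻¹
          = Matrix.diagonal (fun k => (lam τ + d k)⁻¹) := by
        rw [h1]
        apply Matrix.inv_eq_right_inv
        rw [Matrix.diagonal_mul_diagonal]
        convert Matrix.diagonal_one with j
        have := hd j
        exact mul_inv_cancel₀ (by linarith)
      have hzk : z (τ+1) k = (d k * (lam τ + d k)⁻¹) * ztilde τ k := by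
        have h := congrFun (hz τ) k
        rw [hinv, Matrix.diagonal_mul_diagonal] at h
        simpa [Matrix.mulVec_diagonal] using h
      have hs1 : ((τ:ℝ) + 1) / (T:ℝ) ≤ 1 := by
        rw [div_le_one hT']
        exact_mod_cast hτ
      set s : ℝ := ((τ:ℝ) + 1) / (T:ℝ) with hs
      have ha : 0 ≤ 1 - s := by linarith
      have hc0 : 0 ≤ d k * (lam τ + d k)⁻¹ := by positivity
      have hx : 0 ≤ ztilde τ k * z0 k := le_trans (mul_nonneg (by positivity) (mul_self_nonneg _)) ihk
      have e1 : ztilde (τ+1) k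
          = (1 - s) * ((d k * (lam τ + d k)⁻¹) * ztilde τ k) + s * z0 k := by
        have h := congrArg (fun v => v k) (hzt τ)
        simpa [hzk, smul_eq_mul, hs] using h
      have egoal : ((↑(τ+1):ℝ)) / (T:ℝ) = s := by push_cast [hs]; ring
      rw [egoal, e1]
      nlinarith [mul_nonneg (mul_nonneg ha hc0) hx]
  intro t ht
  by_cases h0 : z0 = 0
  · simp [h0]
  · have hip : (inner ℝ (ztilde t) z0 : ℝ) = ∑ k, ztilde t k * z0 k := by
      simp [PiLp.inner_apply, RCLike.inner_apply, mul_comm]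
    have hn : ‖z0‖ ^ 2 = ∑ k, z0 k * z0 k := by
      rw [EuclideanSpace.norm_eq, Real.sq_sqrt (by positivity)]
      exact Finset.sum_congr rfl fun i _ => by rw [Real.norm_eq_abs, sq_abs, sq]
    have hinner : ((t:ℝ)/(T:ℝ)) * ‖z0‖ ^ 2 ≤ (inner ℝ (ztilde t) z0 : ℝ) := by
      rw [hip, hn, Finset.mul_sum]
      exact Finset.sum_le_sum fun k _ => key t ht k
    have hle : (inner ℝ (ztilde t) z0 : ℝ) ≤ ‖ztilde t‖ * ‖z0‖ := real_inner_le_norm _ _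
    have hz0n : 0 < ‖z0‖ := norm_pos_iff.mpr h0
    have : ((t:ℝ)/(T:ℝ)) * ‖z0‖ ^ 2 ≤ ‖ztilde t‖ * ‖z0‖ := le_trans hinner hle
    nlinarith [this, hz0n]
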